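/- Let d, m ∈ ℕ, let f : ℝ^d × ℝ^m → ℝ^d and ℓ : ℝ^d × ℝ^m → ℝ be differentiable, and let v, u, λ_q, λ_v be differentiable functions on [0, T] with values in ℝ^d, ℝ^m, ℝ^d, ℝ^d respectively satisfying the adjoint equations λ_q'(t) = 0 and λ_v'(t) = −∂ℓ/∂v(v(t), u(t)) − λ_q(t) − (∂f/∂v(v(t), u(t)))ᵀ λ_v(t) and the optimality condition 0 = ∂ℓ/∂u(v(t), u(t)) + (∂f/∂u(v(t), u(t)))ᵀ λ_v(t) for all t ∈ [0, T]. Suppose λ_q(t_i) = 0 for some t_i ∈ [0, T], and suppose λ_v(t) = λ is constant on a subinterval [t₁, t₂] ⊆ [0, T] with t₁ < t₂. Then λ_q(t) = 0 for all t ∈ [0, T], and for all t ∈ (t₁, t₂): 0 = ∂ℓ/∂v(v(t), u(t)) + (∂f/∂v(v(t), u(t)))ᵀ λ and 0 = ∂ℓ/∂u(v(t), u(t)) + (∂f/∂u(v(t), u(t)))ᵀ λ, i.e. the necessary optimality conditions of the optimal control problem reduce to the Karush–Kuhn–Tucker conditions of the velocity steady state optimization problem with constant multiplier λ. (Proposition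 2.) -/

import Mathlib

open Set

/-- Proposition 2: if the adjoint `λ_q` vanishes at some time and the
adjoint `λ_v` is constant on a subinterval `[t₁, t₂]`, then the necessary optimality
conditions of the OCP reduce, on `(t₁, t₂)`, to the KKT conditions of the velocity
steady state optimization problem with constant multiplier `λ`. -/
theorem pmp_reduces_to_kkt
    (d m : ℕ) (T : ℝ) (hT : 0 < T)
    (f : EuclideanSpace ℝ (Fin d) → EuclideanSpace ℝ (Fin m) → EuclideanSpace ℝ (Fin d))
    (ℓ : EuclideanSpace ℝ (Fin d) → EuclideanSpace ℝ (Fin m) → ℝ)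
    (hf : Differentiable ℝ (fun p : EuclideanSpace ℝ (Fin d) × EuclideanSpace ℝ (Fin m) => f p.1 p.2))
    (hℓ : Differentiable ℝ (fun p : EuclideanSpace ℝ (Fin d) × EuclideanSpace ℝ (Fin m) => ℓ p.1 p.2))
    (v lamq lamv : ℝ → EuclideanSpace ℝ (Fin d))
    (u : ℝ → EuclideanSpace ℝ (Fin m))
    (hv : Differentiable ℝ v) (hu : Differentiable ℝ u)
    (hlamq_diff : Differentiable ℝ lamq) (hlamv_diff : Differentiable ℝ lamv)
    -- adjoint equation λ_q' = 0
    (hlamq : ∀ t ∈ Icc (0 : ℝ) T, HasDerivAt lamq 0 t)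
    -- adjoint equation λ_v' = −∂ℓ/∂v − λ_q − (∂f/∂v)ᵀ λ_v
    (hlamv : ∀ t ∈ Icc (0 : ℝ) T, HasDerivAt lamv
      (-(gradient (fun v' => ℓ v' (u t)) (v t)) - lamq t -
        (ContinuousLinearMap.adjoint (fderiv ℝ (fun v' => f v' (u t)) (v t))) (lamv t)) t)
    -- stationarity condition 0 = ∂ℓ/∂u + (∂f/∂u)ᵀ λ_v
    (hopt : ∀ t ∈ Icc (0 : ℝ) T,
      gradient (fun u' => ℓ (v t) u') (u t) +
        (ContinuousLinearMap.adjoint (fderiv ℝ (fun u' => f (v t) u') (u t))) (lamv t) = 0)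
    -- λ_q vanishes at some time t_i ∈ [0, T]
    (ti : ℝ) (hti : ti ∈ Icc (0 : ℝ) T) (hlamq_ti : lamq ti = 0)
    -- λ_v ≡ λ constant on a subinterval [t₁, t₂] ⊆ [0, T]
    (t₁ t₂ : ℝ) (ht₁₂ : t₁ < t₂) (hsub : Icc t₁ t₂ ⊆ Icc (0 : ℝ) T)
    (lam : EuclideanSpace ℝ (Fin d))
    (hconst : ∀ t ∈ Icc t₁ t₂, lamv t = lam) :
    (∀ t ∈ Icc (0 : ℝ) T, lamq t = 0) ∧
    (∀ t ∈ Ioo t₁ t₂,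
      gradient (fun v' => ℓ v' (u t)) (v t) +
        (ContinuousLinearMap.adjoint (fderiv ℝ (fun v' => f v' (u t)) (v t))) lam = 0 ∧
      gradient (fun u' => ℓ (v t) u') (u t) +
        (ContinuousLinearMap.adjoint (fderiv ℝ (fun u' => f (v t) u') (u t))) lam = 0) := by
  have hconv : Convex ℝ (Icc (0 : ℝ) T) := convex_Icc 0 T
  have hqz : ∀ t ∈ Icc (0 : ℝ) T, lamq t = 0 := by
    intro t ht
    have hc : lamq t = lamq ti := by
      apply hconv.is_const_of_fderivWithin_eq_zero
        (hlamq_diff.differentiableOn) _ ht hti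
      intro x hx
      have h1 : HasFDerivAt lamq (0 : ℝ →L[ℝ] EuclideanSpace ℝ (Fin d)) x := by
        have := (hlamq x hx).hasFDerivAt
        convert this using 1
        ext y
        simp
        ext y
        simp
      have h2 : fderiv ℝ lamq x = 0 := h1.fderiv
      rw [fderivWithin_eq_fderiv]
      · exact h2
      · exact (uniqueDiffOn_Icc hT) x hx
      · exact hlamq_diff x
    rw [hc, hlamq_ti]
  refine ⟨hqz, ?_⟩
  intro t ht
  have htIcc : t ∈ Icc t₁ t₂ := Ioo_subset_Icc_self ht
  have ht0T : t ∈ Icc (0 : ℝ) T := hsub htIcc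
  have hconst' : ∀ᶠ s in nhds t, lamv s = lam := by
    filter_upwards [Ioo_mem_nhds ht.1 ht.2] with s hs
    exact hconst s (Ioo_subset_Icc_self hs)
  have hzero : HasDerivAt lamv 0 t := by
    have : HasDerivAt (fun _ : ℝ => lam) (0 : EuclideanSpace ℝ (Fin d)) t :=
      hasDerivAt_const t lam
    exact this.congr_of_eventuallyEq hconst'
  have heq := (hlamv t ht0T).unique hzero
  have hlv : lamv t = lam := hconst t htIcc
  have hq : lamq t = 0 := hqz t ht0T
  constructor
  · rw [hq, hlv, sub_zero] at heq
    linear_combination (norm := abel) -heq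
  · have := hopt t ht0T
    rwa [hlv] at this
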